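/- Suppose q ≤ μ and fix ε ∈ ℝ. There exists a unique continuously differentiable function g : (−∞, ε) → (0, ∞) satisfying g'(s) = 1 − Z(g(s))/(q·W(g(s))) for all s < ε, lim_{s↑ε} g(s) = 0 and lim_{s→−∞} g(s) = +∞. (Brownian-motion instance of Lemma 3.1 in the case q ≤ ψ(1), where k* = ∞.) -/

import Mathlib

open Real Filter Set MeasureTheory

noncomputable def dlt (σ μ q : ℝ) : ℝ := Real.sqrt ((μ / σ ^ 2 - 1 / 2) ^ 2 + 2 * q / σ ^ 2)

noncomputable def gma (σ μ : ℝ) : ℝ := 1 / 2 - μ / σ ^ 2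

noncomputable def gma1 (σ μ q : ℝ) : ℝ := gma σ μ - dlt σ μ q

noncomputable def gma2 (σ μ q : ℝ) : ℝ := gma σ μ + dlt σ μ q

/-- The scale function `W^{(q)}` of `X_t = (μ - σ²/2) t + σ B_t`. -/
noncomputable def W (σ μ q : ℝ) (x : ℝ) : ℝ :=
  if 0 ≤ x then 2 / (σ ^ 2 * dlt σ μ q) * Real.exp (gma σ μ * x) * Real.sinh (dlt σ μ q * x)
  else 0

/-- The scale function `Z^{(q)}` of `X_t = (μ - σ²/2) t + σ B_t`. -/
noncomputable def Z (σ μ q : ℝ) (x : ℝ) : ℝ :=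
  if 0 ≤ x then
    Real.exp (gma σ μ * x) * Real.cosh (dlt σ μ q * x)
      - gma σ μ / dlt σ μ q * Real.exp (gma σ μ * x) * Real.sinh (dlt σ μ q * x)
  else 1

/-- `k* = (γ₂ - γ₁)⁻¹ log((1 - 1/γ₁)/(1 - 1/γ₂))`. -/
noncomputable def kstar (σ μ q : ℝ) : ℝ :=
  (gma2 σ μ q - gma1 σ μ q)⁻¹ *
    Real.log ((1 - 1 / gma1 σ μ q) / (1 - 1 / gma2 σ μ q))

/-- auxiliary -/

noncomputable def aco (σ μ q : ℝ) : ℝ := gma σ μ + (dlt σ μ q) ^ 2 - (gma σ μ) ^ 2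
noncomputable def Df (σ μ q x : ℝ) : ℝ :=
  dlt σ μ q * Real.cosh (dlt σ μ q * x) - aco σ μ q * Real.sinh (dlt σ μ q * x)
noncomputable def phi (σ μ q x : ℝ) : ℝ :=
  ((dlt σ μ q) ^ 2 - (gma σ μ) ^ 2) * Real.sinh (dlt σ μ q * x) / Df σ μ q x

section
variable {σ μ q : ℝ} (hσ : 0 < σ) (hq : 0 < q) (hqμ : q ≤ μ)
include hσ hq

lemma dlt_sq : (dlt σ μ q) ^ 2 = (gma σ μ) ^ 2 + 2 * q / σ ^ 2 := by
  have h1 : (0:ℝ) ≤ (μ / σ ^ 2 - 1 / 2) ^ 2 + 2 * q / σ ^ 2 := by positivity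
  have := Real.sq_sqrt h1
  rw [dlt, this] ; rw [gma] ; ring

lemma b_pos : 0 < (dlt σ μ q) ^ 2 - (gma σ μ) ^ 2 := by
  rw [dlt_sq hσ hq]
  have : 0 < 2 * q / σ ^ 2 := by positivity
  linarith

lemma dlt_pos : 0 < dlt σ μ q := by
  have h := b_pos hσ hq (μ := μ)
  have h2 : 0 ≤ dlt σ μ q := Real.sqrt_nonneg _
  nlinarith [sq_nonneg (gma σ μ)]

lemma gma_lt : gma σ μ < dlt σ μ q := by
  have h := b_pos hσ hq (μ := μ)
  have h2 := dlt_pos hσ hq (μ := μ)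
  nlinarith

lemma neg_gma_lt : -gma σ μ < dlt σ μ q := by
  have h := b_pos hσ hq (μ := μ)
  have h2 := dlt_pos hσ hq (μ := μ)
  nlinarith

include hqμ in
lemma sum_le_one : dlt σ μ q + gma σ μ ≤ 1 := by
  have hμq : (0:ℝ) ≤ μ - q := by linarith
  have h1 : (1 - gma σ μ) ^ 2 - (dlt σ μ q) ^ 2 = 2 * (μ - q) / σ ^ 2 := by
    rw [dlt_sq hσ hq, gma]; field_simp; ring
  have h2 : 0 ≤ 2 * (μ - q) / σ ^ 2 := by positivity
  have h3 := dlt_pos hσ hq (μ := μ)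
  have h4 : gma σ μ < 1 := by
    have hμ : 0 < μ := lt_of_lt_of_le hq hqμ
    have : 0 < μ / σ ^ 2 := by positivity
    rw [gma]; linarith
  nlinarith

include hqμ in
lemma dma_nonneg : 0 ≤ dlt σ μ q - aco σ μ q := by
  have h1 := gma_lt hσ hq (μ := μ)
  have h2 := sum_le_one hσ hq hqμ
  have : dlt σ μ q - aco σ μ q = (dlt σ μ q - gma σ μ) * (1 - (dlt σ μ q + gma σ μ)) := by
    rw [aco]; ring
  rw [this]
  exact mul_nonneg (by linarith) (by linarith)

lemma dpa_pos : 0 < dlt σ μ q + aco σ μ q := by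
  have h1 := neg_gma_lt hσ hq (μ := μ)
  have h2 := gma_lt hσ hq (μ := μ)
  have h3 := dlt_pos hσ hq (μ := μ)
  have : dlt σ μ q + aco σ μ q = (dlt σ μ q + gma σ μ) * (1 + (dlt σ μ q - gma σ μ)) := by
    rw [aco]; ring
  rw [this]
  exact mul_pos (by linarith) (by linarith)

include hqμ in
lemma Df_pos (x : ℝ) : 0 < Df σ μ q x := by
  have h1 := dma_nonneg hσ hq hqμ
  have h2 := dpa_pos hσ hq (μ := μ)
  rw [Df, Real.cosh_eq, Real.sinh_eq]
  nlinarith [Real.exp_pos (dlt σ μ q * x), Real.exp_pos (-(dlt σ μ q * x)),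
    mul_nonneg h1 (Real.exp_pos (dlt σ μ q * x)).le]

include hqμ in
lemma phi_cont : Continuous (phi σ μ q) := by
  unfold phi Df
  apply Continuous.div
  · fun_prop
  · fun_prop
  · intro x
    have := Df_pos hσ hq hqμ x
    rw [Df] at this
    exact this.ne'

include hqμ in
lemma phi_pos {x : ℝ} (hx : 0 < x) : 0 < phi σ μ q x := by
  have h1 := Df_pos hσ hq hqμ x
  have h2 := b_pos hσ hq (μ := μ)
  have h3 : 0 < Real.sinh (dlt σ μ q * x) := by
    exact Real.sinh_pos_iff.2 (mul_pos (dlt_pos hσ hq) hx)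
  exact div_pos (mul_pos h2 h3) h1

include hqμ in
lemma phi_nonneg {x : ℝ} (hx : 0 ≤ x) : 0 ≤ phi σ μ q x := by
  rcases hx.eq_or_lt with h | h
  · simp [phi, ← h]
  · exact (phi_pos hσ hq hqμ h).le
end

noncomputable def Ff (σ μ q x : ℝ) : ℝ := ∫ t in (0:ℝ)..x, phi σ μ q t
noncomputable def Fe (σ μ q x : ℝ) : ℝ := if 0 ≤ x then Ff σ μ q x else x

section
variable {σ μ q : ℝ} (hσ : 0 < σ) (hq : 0 < q) (hqμ : q ≤ μ)
include hσ hq hqμ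

lemma Ff_deriv (x : ℝ) : HasDerivAt (Ff σ μ q) (phi σ μ q x) x :=
  ((phi_cont hσ hq hqμ).integral_hasStrictDerivAt 0 x).hasDerivAt

lemma Ff_cont : Continuous (Ff σ μ q) := by
  have : Differentiable ℝ (Ff σ μ q) := fun x => (Ff_deriv hσ hq hqμ x).differentiableAt
  exact this.continuous

lemma Ff_zero : Ff σ μ q 0 = 0 := by simp [Ff]

lemma Ff_nonneg {x : ℝ} (hx : 0 ≤ x) : 0 ≤ Ff σ μ q x :=
  intervalIntegral.integral_nonneg hx (fun u hu => phi_nonneg hσ hq hqμ hu.1)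

lemma Ff_strictMonoOn : ∀ x y, 0 ≤ x → x < y → Ff σ μ q x < Ff σ μ q y := by
  intro x y hx hxy
  have hint : ∀ a b : ℝ, IntervalIntegrable (phi σ μ q) volume a b :=
    fun a b => (phi_cont hσ hq hqμ).intervalIntegrable a b
  have key : Ff σ μ q y - Ff σ μ q x = ∫ t in x..y, phi σ μ q t := by
    rw [Ff, Ff, ← intervalIntegral.integral_interval_sub_left (hint 0 y) (hint 0 x)]
  have hpos : 0 < ∫ t in x..y, phi σ μ q t := by
    apply intervalIntegral.intervalIntegral_pos_of_pos_on (hint x y) _ hxy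
    intro t ht
    exact phi_pos hσ hq hqμ (lt_of_le_of_lt hx ht.1)
  linarith

lemma Fe_strictMono : StrictMono (Fe σ μ q) := by
  intro x y hxy
  rcases le_or_gt 0 x with hx | hx
  · rw [Fe, Fe, if_pos hx, if_pos (by linarith : (0:ℝ) ≤ y)]
    exact Ff_strictMonoOn hσ hq hqμ x y hx hxy
  · rcases le_or_gt 0 y with hy | hy
    · rw [Fe, Fe, if_neg (not_le.2 hx), if_pos hy]
      calc x < 0 := hx
        _ ≤ Ff σ μ q y := Ff_nonneg hσ hq hqμ hy
    · rw [Fe, Fe, if_neg (not_le.2 hx), if_neg (not_le.2 hy)]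
      exact hxy

lemma Fe_cont : Continuous (Fe σ μ q) := by
  rw [show Fe σ μ q = fun x => if (fun _ : ℝ => (0:ℝ)) x ≤ id x then Ff σ μ q x else id x from rfl]
  apply Continuous.if_le (Ff_cont hσ hq hqμ) continuous_id continuous_const continuous_id
  intro x hx
  simp only [id] at hx ⊢
  rw [← hx, Ff_zero hσ hq hqμ]

lemma Fe_zero : Fe σ μ q 0 = 0 := by rw [Fe, if_pos le_rfl, Ff_zero hσ hq hqμ]

end

section
variable {σ μ q : ℝ} (hσ : 0 < σ) (hq : 0 < q) (hqμ : q ≤ μ)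
include hσ hq hqμ

lemma phi_lb : ∃ c : ℝ, 0 < c ∧ ∀ x : ℝ, 1 ≤ x → c ≤ phi σ μ q x := by
  set δ := dlt σ μ q with hδdef
  set a := aco σ μ q with hadef
  have hδ := dlt_pos hσ hq (μ := μ)
  have hb := b_pos hσ hq (μ := μ)
  set b := δ ^ 2 - (gma σ μ) ^ 2 with hbdef
  have he2 : Real.exp (-(2*δ)) < 1 := Real.exp_lt_one_iff.2 (by linarith)
  refine ⟨b * (1 - Real.exp (-(2*δ))) / (2 * (δ + |a|)), ?_, ?_⟩
  · have h0 : 0 < δ + |a| := by positivity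
    exact div_pos (mul_pos hb (by linarith)) (by linarith)
  · intro x hx
    have hDpos := Df_pos hσ hq hqμ x
    have hδx : 0 ≤ δ * x := by nlinarith
    have hE : Real.exp δ ≤ Real.exp (δ * x) := Real.exp_le_exp.2 (by nlinarith)
    have hE1 : 1 ≤ Real.exp (δ * x) := Real.one_le_exp hδx
    have hE'1 : Real.exp (-(δ * x)) ≤ 1 := Real.exp_le_one_iff.2 (by linarith)
    have hEE : Real.exp (δ * x) * Real.exp (-(δ * x)) = 1 := by
      rw [← Real.exp_add]; norm_num
    have hee : Real.exp (-(2*δ)) * (Real.exp δ * Real.exp δ) = 1 := by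
      rw [← Real.exp_add, ← Real.exp_add]
      norm_num [show -(2*δ) + (δ + δ) = 0 by ring]
    have hpa : 0 < δ + |a| := by positivity
    have hc0 : 0 ≤ b * (1 - Real.exp (-(2*δ))) / (2 * (δ + |a|)) :=
      div_nonneg (mul_nonneg hb.le (by linarith)) (by linarith)
    rw [phi, ← hδdef, ← hbdef, le_div_iff₀ hDpos]
    have hDle : Df σ μ q x ≤ (δ + |a|) * Real.exp (δ * x) := by
      rw [Df, ← hδdef, ← hadef, Real.cosh_eq, Real.sinh_eq]
      have h2 : -(a * ((Real.exp (δ * x) - Real.exp (-(δ * x))) / 2))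
          ≤ |a| * Real.exp (δ * x) := by
        have habs : |a * ((Real.exp (δ * x) - Real.exp (-(δ * x))) / 2)|
            ≤ |a| * Real.exp (δ * x) := by
          rw [abs_mul]
          apply mul_le_mul_of_nonneg_left _ (abs_nonneg a)
          rw [abs_le]
          constructor <;> linarith [Real.exp_pos (-(δ * x))]
        calc -(a * ((Real.exp (δ * x) - Real.exp (-(δ * x))) / 2)) ≤ _ := neg_le_abs _
          _ ≤ _ := habs
      nlinarith [Real.exp_pos (-(δ * x))]
    have hsinh : Real.exp (δ * x) * (1 - Real.exp (-(2*δ))) / 2 ≤ Real.sinh (δ * x) := by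
      rw [Real.sinh_eq]
      have hE2 : Real.exp (-(δ * x)) ≤ Real.exp (-(2*δ)) * Real.exp (δ * x) := by
        nlinarith [mul_nonneg (Real.exp_pos (-(2*δ))).le
            (mul_nonneg (sub_nonneg.2 hE) (by positivity : (0:ℝ) ≤ Real.exp (δ*x) + Real.exp δ)),
          hEE, hee, Real.exp_pos (δ*x), Real.exp_pos (-(δ*x))]
      linarith
    calc b * (1 - Real.exp (-(2*δ))) / (2 * (δ + |a|)) * Df σ μ q x
        ≤ b * (1 - Real.exp (-(2*δ))) / (2 * (δ + |a|)) * ((δ + |a|) * Real.exp (δ * x)) :=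
          mul_le_mul_of_nonneg_left hDle hc0
      _ = b * (Real.exp (δ * x) * (1 - Real.exp (-(2*δ))) / 2) := by
          field_simp
      _ ≤ b * Real.sinh (δ * x) := mul_le_mul_of_nonneg_left hsinh hb.le

lemma Ff_atTop : Tendsto (Ff σ μ q) atTop atTop := by
  obtain ⟨c, hc, hcb⟩ := phi_lb hσ hq hqμ
  have key : ∀ x : ℝ, 1 ≤ x → Ff σ μ q 1 + c * (x - 1) ≤ Ff σ μ q x := by
    intro x hx
    have hint : ∀ a b : ℝ, IntervalIntegrable (phi σ μ q) volume a b :=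
      fun a b => (phi_cont hσ hq hqμ).intervalIntegrable a b
    have key2 : Ff σ μ q x - Ff σ μ q 1 = ∫ t in (1:ℝ)..x, phi σ μ q t := by
      rw [Ff, Ff, ← intervalIntegral.integral_interval_sub_left (hint 0 x) (hint 0 1)]
    have hmono : c * (x - 1) ≤ ∫ t in (1:ℝ)..x, phi σ μ q t := by
      have := intervalIntegral.integral_mono_on hx (intervalIntegrable_const (c := c)) (hint 1 x)
        (fun t ht => hcb t ht.1)
      simpa [mul_comm] using this
    linarith
  apply tendsto_atTop_mono' _ _ (tendsto_atTop_add_const_left _ (Ff σ μ q 1)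
    ((tendsto_atTop_add_const_right _ (-1 : ℝ) tendsto_id).const_mul_atTop hc))
  filter_upwards [eventually_ge_atTop (1:ℝ)] with x hx
  simpa [sub_eq_add_neg] using key x hx

lemma Fe_surj : Function.Surjective (Fe σ μ q) := by
  apply (Fe_cont hσ hq hqμ).surjective
  · apply Tendsto.congr' _ (Ff_atTop hσ hq hqμ)
    filter_upwards [eventually_ge_atTop (0:ℝ)] with x hx
    rw [Fe, if_pos hx]
  · apply Tendsto.congr' _ tendsto_id
    filter_upwards [eventually_lt_atBot (0:ℝ)] with x hx
    rw [Fe, if_neg (not_le.2 hx)]; rfl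

end

section
variable {σ μ q : ℝ} (hσ : 0 < σ) (hq : 0 < q) (hqμ : q ≤ μ)
include hσ hq hqμ

lemma ode_id {x : ℝ} (hx : 0 < x) :
    1 - Z σ μ q x / (q * W σ μ q x) = -(phi σ μ q x)⁻¹ := by
  have hδ := dlt_pos hσ hq (μ := μ)
  have hb := b_pos hσ hq (μ := μ)
  have hD := Df_pos hσ hq hqμ x
  have hs : 0 < Real.sinh (dlt σ μ q * x) := Real.sinh_pos_iff.2 (mul_pos hδ hx)
  have hE : 0 < Real.exp (gma σ μ * x) := Real.exp_pos _
  have hbq : σ ^ 2 * ((dlt σ μ q) ^ 2 - (gma σ μ) ^ 2) = 2 * q := by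
    rw [dlt_sq hσ hq]; field_simp; ring
  rw [Z, W, if_pos hx.le, if_pos hx.le, phi]
  rw [Df, aco] at hD ⊢
  field_simp
  linear_combination (-(dlt σ μ q * Real.cosh (x * dlt σ μ q)
    - gma σ μ * Real.sinh (x * dlt σ μ q))) * hbq

end

theorem stmt_13 (σ μ q ε : ℝ) (hσ : 0 < σ) (hq : 0 < q) (hqμ : q ≤ μ) :
    ∃ g : ℝ → ℝ,
      ((∀ s ∈ Set.Iio ε, g s ∈ Set.Ioi (0 : ℝ)) ∧
        ContDiffOn ℝ 1 g (Set.Iio ε) ∧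
        (∀ s ∈ Set.Iio ε, HasDerivAt g (1 - Z σ μ q (g s) / (q * W σ μ q (g s))) s) ∧
        Filter.Tendsto g (nhdsWithin ε (Set.Iio ε)) (nhds 0) ∧
        Filter.Tendsto g Filter.atBot Filter.atTop) ∧
      ∀ g' : ℝ → ℝ,
        ((∀ s ∈ Set.Iio ε, g' s ∈ Set.Ioi (0 : ℝ)) ∧
          ContDiffOn ℝ 1 g' (Set.Iio ε) ∧
          (∀ s ∈ Set.Iio ε, HasDerivAt g' (1 - Z σ μ q (g' s) / (q * W σ μ q (g' s))) s) ∧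
          Filter.Tendsto g' (nhdsWithin ε (Set.Iio ε)) (nhds 0) ∧
          Filter.Tendsto g' Filter.atBot Filter.atTop) →
        Set.EqOn g' g (Set.Iio ε) := by
  have hmono := Fe_strictMono hσ hq hqμ
  have hsurj := Fe_surj hσ hq hqμ
  set e := StrictMono.orderIsoOfSurjective (Fe σ μ q) hmono hsurj with he
  have hFeG : ∀ y, Fe σ μ q (e.symm y) = y := fun y =>
    StrictMono.orderIsoOfSurjective_self_symm_apply _ hmono hsurj y
  have hGFe : ∀ x, e.symm (Fe σ μ q x) = x := fun x =>
    StrictMono.orderIsoOfSurjective_symm_apply_self _ hmono hsurj x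
  have hG0 : e.symm 0 = 0 := by
    conv_lhs => rw [← Fe_zero hσ hq hqμ (σ := σ) (μ := μ) (q := q)]
    exact hGFe 0
  have hGcont : Continuous (e.symm : ℝ → ℝ) := OrderIso.continuous _
  set g : ℝ → ℝ := fun s => e.symm (ε - s) with hgdef
  have hgc : Continuous g := hGcont.comp (continuous_const.sub continuous_id)
  have hgpos : ∀ s ∈ Set.Iio ε, g s ∈ Set.Ioi (0:ℝ) := by
    intro s hs
    simp only [Set.mem_Ioi]
    by_contra h
    push_neg at h
    have h1 : Fe σ μ q (g s) ≤ Fe σ μ q 0 := hmono.monotone h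
    rw [Fe_zero hσ hq hqμ, hgdef] at h1
    simp only [hFeG] at h1
    simp only [Set.mem_Iio] at hs
    linarith
  have hFeDeriv : ∀ x : ℝ, 0 < x → HasDerivAt (Fe σ μ q) (phi σ μ q x) x := by
    intro x hx
    apply (Ff_deriv hσ hq hqμ x).congr_of_eventuallyEq
    filter_upwards [Ioi_mem_nhds hx] with y hy
    rw [Fe, if_pos (le_of_lt hy)]
  have hgderiv : ∀ s ∈ Set.Iio ε,
      HasDerivAt g (1 - Z σ μ q (g s) / (q * W σ μ q (g s))) s := by
    intro s hs
    have hx : 0 < g s := hgpos s hs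
    have hphi := phi_pos hσ hq hqμ hx
    have hdf : HasDerivAt (fun t => ε - Fe σ μ q t) (-(phi σ μ q (g s))) (g s) :=
      (hFeDeriv _ hx).const_sub ε
    have hfg : ∀ y : ℝ, ε - Fe σ μ q (g y) = y := by
      intro y
      rw [hgdef]
      simp only [hFeG]
      ring
    have := HasDerivAt.of_local_left_inverse (hgc.continuousAt)
      hdf (neg_ne_zero.2 hphi.ne') (Filter.Eventually.of_forall hfg)
    rw [ode_id hσ hq hqμ hx, ← inv_neg]
    exact this
  have hglim : Filter.Tendsto g (nhdsWithin ε (Set.Iio ε)) (nhds 0) := by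
    have h1 : Filter.Tendsto (fun s : ℝ => ε - s) (nhdsWithin ε (Set.Iio ε)) (nhds 0) := by
      have hc : Continuous (fun s : ℝ => ε - s) := by fun_prop
      have := (hc.tendsto ε).mono_left (nhdsWithin_le_nhds (s := Set.Iio ε))
      simpa using this
    have := (hGcont.tendsto 0).comp h1
    rw [hG0] at this
    exact this
  have hgbot : Filter.Tendsto g Filter.atBot Filter.atTop := by
    have h1 : Filter.Tendsto (fun s : ℝ => ε - s) Filter.atBot Filter.atTop := by
      apply Filter.Tendsto.congr (fun x => (sub_eq_add_neg ε x).symm)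
      exact tendsto_atTop_add_const_left _ ε tendsto_neg_atBot_atTop
    have h2 : Filter.Tendsto (fun y => e.symm y) Filter.atTop Filter.atTop :=
      Filter.tendsto_atTop_atTop_of_monotone e.symm.monotone
        (fun b => ⟨Fe σ μ q b, (hGFe b).ge⟩)
    exact h2.comp h1
  have hgcd : ContDiffOn ℝ 1 g (Set.Iio ε) := by
    rw [show (1 : WithTop ℕ∞) = 0 + 1 by norm_num,
      contDiffOn_succ_iff_deriv_of_isOpen isOpen_Iio]
    refine ⟨fun s hs => (hgderiv s hs).differentiableAt.differentiableWithinAt, by simp, ?_⟩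
    rw [contDiffOn_zero]
    apply ContinuousOn.congr (f := fun s => (-(phi σ μ q (g s)))⁻¹)
    · apply ContinuousOn.inv₀
      · exact (((phi_cont hσ hq hqμ).comp hgc).neg).continuousOn
      · intro s hs
        exact neg_ne_zero.2 (phi_pos hσ hq hqμ (hgpos s hs)).ne'
    · intro s hs
      have h1 := (hgderiv s hs).deriv
      have h2 := ode_id hσ hq hqμ (hgpos s hs)
      simp only [h1, h2, inv_neg]
  refine ⟨g, ⟨hgpos, hgcd, hgderiv, hglim, hgbot⟩, ?_⟩
  rintro g' ⟨hpos', -, hder', hlim', -⟩ s hs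
  set Φ : ℝ → ℝ := fun t => Fe σ μ q (g' t) + t with hΦdef
  have hΦd : ∀ t ∈ Set.Iio ε, HasDerivAt Φ 0 t := by
    intro t ht
    have hx : 0 < g' t := hpos' t ht
    have hphi := phi_pos hσ hq hqμ hx
    have hd1 : HasDerivAt g' (-(phi σ μ q (g' t))⁻¹) t := by
      have := hder' t ht
      rwa [ode_id hσ hq hqμ hx] at this
    have hd2 := (hFeDeriv _ hx).comp t hd1
    have hd3 := hd2.add (hasDerivAt_id t)
    have : phi σ μ q (g' t) * -(phi σ μ q (g' t))⁻¹ + 1 = 0 := by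
      field_simp
      norm_num
    rw [this] at hd3
    exact hd3
  have hconst : ∀ t ∈ Set.Iio ε, ∀ t' ∈ Set.Iio ε, Φ t = Φ t' := by
    intro t ht t' ht'
    apply (convex_Iio ε).is_const_of_fderivWithin_eq_zero
      (fun u hu => (hΦd u hu).differentiableAt.differentiableWithinAt) _ ht ht'
    intro u hu
    rw [fderivWithin_of_isOpen isOpen_Iio hu, (hΦd u hu).hasFDerivAt.fderiv]
    ext y
    simp
  have hΦlim : Filter.Tendsto Φ (nhdsWithin ε (Set.Iio ε)) (nhds (0 + ε)) := by
    apply Filter.Tendsto.add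
    · have h1 := ((Fe_cont hσ hq hqμ).tendsto 0).comp hlim'
      rwa [Fe_zero hσ hq hqμ] at h1
    · exact tendsto_id.mono_left nhdsWithin_le_nhds
  have hΦconst : Filter.Tendsto Φ (nhdsWithin ε (Set.Iio ε)) (nhds (Φ s)) := by
    apply Filter.Tendsto.congr' _ tendsto_const_nhds
    filter_upwards [self_mem_nhdsWithin] with u hu
    exact hconst s hs u hu
  have hΦs : Φ s = ε := by
    have := tendsto_nhds_unique hΦconst hΦlim
    linarith
  have hFeg' : Fe σ μ q (g' s) = ε - s := by
    rw [hΦdef] at hΦs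
    simp only at hΦs
    linarith
  have hFeg : Fe σ μ q (g s) = ε - s := by
    rw [hgdef]; exact hFeG _
  exact hmono.injective (hFeg'.trans hFeg.symm)
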